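/- Let k be a field of characteristic zero, A = k[x,y,z] with Schouten bracket on polyvector fields, and f ∈ A with finite Milnor number. Then every bivector field S ∈ Λ²_A T_A satisfying [f, S] = 0 is of the form S = [f, T] for some trivector field T, and in particular satisfies [S, S] = 0 (is Poisson). -/

import Mathlib

open MvPolynomial

/- Polyvector fields on affine `n`-space in coordinates.  Since `T_A = Der_k(A)` is free on
`∂₁, …, ∂ₙ`, a `p`-vector field is given by its alternating array of coefficients.  The
Schouten–Nijenhuis bracket is given by the classical coordinate formulas below. -/

variable {k : Type*} [CommRing k] {n : ℕ}

/-- The coefficients of the Schouten bracket `[g, S]` (contraction of the bivector `S` with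
`dg`): `[g,S]_j = ∑ᵢ S i j ∂ᵢ g`.  It is a vector field. -/
noncomputable def schFnBiv (g : MvPolynomial (Fin n) k)
    (S : Fin n → Fin n → MvPolynomial (Fin n) k) : Fin n → MvPolynomial (Fin n) k :=
  fun j => ∑ i, S i j * pderiv i g

/-- The coefficients of the Schouten bracket `[g, T]` of a function with a trivector `T`
(contraction with `dg`): it is a bivector, `[g,T]_{jk} = ∑ᵢ T i j k ∂ᵢ g`. -/
noncomputable def schFnTriv (g : MvPolynomial (Fin n) k)
    (T : Fin n → Fin n → Fin n → MvPolynomial (Fin n) k) :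
    Fin n → Fin n → MvPolynomial (Fin n) k :=
  fun j l => ∑ i, T i j l * pderiv i g

/-- The coefficients of the Schouten bracket `[S, S]` of a bivector with itself; it is a
trivector with components `[S,S]^{ijk} = 2 ∑ₗ (S l i ∂ₗ S j k + S l j ∂ₗ S k i + S l k ∂ₗ S i j)`
(we drop the overall factor 2, harmless in characteristic zero). -/
noncomputable def schBivBiv (S : Fin n → Fin n → MvPolynomial (Fin n) k) :
    Fin n → Fin n → Fin n → MvPolynomial (Fin n) k :=
  fun i j l => ∑ m, (S m i * pderiv m (S j l) + S m j * pderiv m (S l i) +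
    S m l * pderiv m (S i j))

/-- A trivector array is alternating. -/
def IsAltTriv (T : Fin n → Fin n → Fin n → MvPolynomial (Fin n) k) : Prop :=
  ∀ i j l, T i j l = - T j i l ∧ T i j l = - T i l j

/-- A bivector array is antisymmetric. -/
def IsAltBiv (S : Fin n → Fin n → MvPolynomial (Fin n) k) : Prop :=
  ∀ i j, S i j = - S j i

section AuxiliaryLemmas

/-- Second partial derivatives of multivariate polynomials commute. -/
lemma my_pderiv_comm (i j : Fin n) (f : MvPolynomial (Fin n) k) :
    pderiv i (pderiv j f) = pderiv j (pderiv i f) := by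
  induction f using MvPolynomial.induction_on with
  | C a => simp
  | add p q hp hq => simp [hp, hq]
  | mul_X p s hp =>
      by_cases his : i = s <;> by_cases hjs : j = s
      · subst his; subst hjs; simp
      · subst his; simp [pderiv_mul, hp, pderiv_X_self, pderiv_X_of_ne, hjs]; ring
      · subst hjs; simp [pderiv_mul, hp, pderiv_X_self, pderiv_X_of_ne, his]; ring
      · simp [pderiv_mul, hp, pderiv_X_self, pderiv_X_of_ne, his, hjs]

/-- The Levi-Civita symbol on `Fin 3`. -/
def myEps : Fin 3 → Fin 3 → Fin 3 → ℤ :=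
  fun i j l => (((j : Fin 3).val : ℤ) - ((i : Fin 3).val : ℤ)) *
    (((l : Fin 3).val : ℤ) - ((i : Fin 3).val : ℤ)) *
    (((l : Fin 3).val : ℤ) - ((j : Fin 3).val : ℤ)) / 2

lemma myEps_alt : ∀ i j l : Fin 3, myEps i j l = - myEps j i l ∧ myEps i j l = - myEps i l j := by
  decide

lemma my_aevalX_retract (i : Fin n) (q : Polynomial k) :
    aeval (fun j : Fin n => if j = i then (Polynomial.X : Polynomial k) else 0)
      (Polynomial.aeval (X i : MvPolynomial (Fin n) k) q) = q := by
  have h : ((aeval (fun j : Fin n => if j = i then (Polynomial.X : Polynomial k) else 0)).comp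
      (Polynomial.aeval (X i : MvPolynomial (Fin n) k)) : Polynomial k →ₐ[k] Polynomial k)
      = AlgHom.id k (Polynomial k) := by
    apply Polynomial.algHom_ext
    simp
  exact congrArg (fun (F : Polynomial k →ₐ[k] Polynomial k) => F q) h

lemma my_aevalX_ne_zero [Nontrivial k] (i : Fin n) {q : Polynomial k} (hq : q.Monic) :
    Polynomial.aeval (X i : MvPolynomial (Fin n) k) q ≠ 0 := by
  intro h0
  have h := my_aevalX_retract i q
  rw [h0] at h
  simp at h
  exact hq.ne_zero h.symm

lemma my_degreeOf_aevalX [Nontrivial k] {i j : Fin n} (hij : j ≠ i) (q : Polynomial k) :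
    degreeOf j (Polynomial.aeval (X i : MvPolynomial (Fin n) k) q) = 0 := by
  induction q using Polynomial.induction_on' with
  | add p r hp hr =>
      rw [map_add]
      have := degreeOf_add_le j (Polynomial.aeval (X i : MvPolynomial (Fin n) k) p)
        (Polynomial.aeval (X i : MvPolynomial (Fin n) k) r)
      omega
  | monomial m a =>
      rw [Polynomial.aeval_monomial]
      refine Nat.le_zero.1 (le_trans (degreeOf_mul_le _ _ _) ?_)
      have h1 : degreeOf j ((algebraMap k (MvPolynomial (Fin n) k)) a) = 0 := by
        rw [algebraMap_eq]; exact degreeOf_C a j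
      have h2 : degreeOf j ((X i : MvPolynomial (Fin n) k) ^ m) = 0 := by
        refine Nat.le_zero.1 (le_trans (degreeOf_pow_le _ _ _) ?_)
        classical
        rw [degreeOf_X, if_neg hij]
        simp
      omega

lemma my_degreeOf_le_mul {k : Type*} [Field k] {u v : MvPolynomial (Fin 3) k} (j : Fin 3)
    (hu : u ≠ 0) (hv : v ≠ 0) : degreeOf j u ≤ degreeOf j (u * v) := by
  classical
  set e : Fin 3 ≃ Fin 3 := Equiv.swap j 0 with he
  have key : ∀ w : MvPolynomial (Fin 3) k, degreeOf 0 (rename e w) = degreeOf j w := by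
    intro w
    have h := degreeOf_rename_of_injective (e.injective) (p := w) j
    rwa [show e j = 0 from Equiv.swap_apply_left j 0] at h
  have hru : rename (⇑e) u ≠ 0 := fun h => hu (by
    have := congrArg (rename (⇑e.symm)) h
    simpa [rename_rename, Function.comp] using this)
  have hrv : rename (⇑e) v ≠ 0 := fun h => hv (by
    have := congrArg (rename (⇑e.symm)) h
    simpa [rename_rename, Function.comp] using this)
  rw [← key u, ← key (u * v), map_mul]
  rw [← natDegree_finSuccEquiv, ← natDegree_finSuccEquiv, map_mul]
  have h1 : (finSuccEquiv k 2) (rename (⇑e) u) ≠ 0 := fun h => hru (by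
    simpa using (finSuccEquiv k 2).injective (h.trans (map_zero _).symm))
  have h2 : (finSuccEquiv k 2) (rename (⇑e) v) ≠ 0 := fun h => hrv (by
    simpa using (finSuccEquiv k 2).injective (h.trans (map_zero _).symm))
  rw [Polynomial.natDegree_mul h1 h2]
  exact Nat.le_add_right _ _

/-- If the Milnor algebra is finite dimensional, then the partial derivatives of `f` have no
common prime factor. -/
lemma my_no_common_prime (k : Type*) [Field k] (f : MvPolynomial (Fin 3) k)
    (hμ : FiniteDimensional k
      (MvPolynomial (Fin 3) k ⧸
        Ideal.span (Set.range fun i : Fin 3 => pderiv i f)))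
    (p : MvPolynomial (Fin 3) k) (hp : Prime p) : ¬ ∀ i, p ∣ pderiv i f := by
  intro hdvd
  set I : Ideal (MvPolynomial (Fin 3) k) := Ideal.span (Set.range fun i : Fin 3 => pderiv i f)
    with hI
  set J : Ideal (MvPolynomial (Fin 3) k) := Ideal.span {p} with hJ
  have hIJ : I ≤ J := by
    rw [hI, Ideal.span_le]
    rintro _ ⟨i, rfl⟩
    exact Ideal.mem_span_singleton.2 (hdvd i)
  let φ : (MvPolynomial (Fin 3) k ⧸ I) →ₐ[k] (MvPolynomial (Fin 3) k ⧸ J) :=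
    Ideal.Quotient.liftₐ I (Ideal.Quotient.mkₐ k J) (fun a ha => by
      rw [Ideal.Quotient.mkₐ_eq_mk, Ideal.Quotient.eq_zero_iff_mem]
      exact hIJ ha)
  have hφs : Function.Surjective φ := by
    intro x
    obtain ⟨a, rfl⟩ := Ideal.Quotient.mk_surjective (I := J) x
    exact ⟨Ideal.Quotient.mk I a, by
      simp [φ, Ideal.Quotient.liftₐ_apply, Ideal.Quotient.lift_mk]; rfl⟩
  have : Module.Finite k (MvPolynomial (Fin 3) k ⧸ J) :=
    Module.Finite.of_surjective φ.toLinearMap hφs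
  have key : ∀ i : Fin 3, ∃ g : MvPolynomial (Fin 3) k,
      g ≠ 0 ∧ p ∣ g ∧ ∀ j, j ≠ i → degreeOf j g = 0 := by
    intro i
    obtain ⟨q, hqm, hq0⟩ :=
      (IsIntegral.of_finite k (Ideal.Quotient.mk J (X i) : MvPolynomial (Fin 3) k ⧸ J))
    refine ⟨Polynomial.aeval (X i : MvPolynomial (Fin 3) k) q, my_aevalX_ne_zero i hqm, ?_,
      fun j hj => my_degreeOf_aevalX hj q⟩
    rw [← Ideal.mem_span_singleton, ← hJ, ← Ideal.Quotient.eq_zero_iff_mem]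
    have hcomm : Ideal.Quotient.mk J (Polynomial.aeval (X i : MvPolynomial (Fin 3) k) q)
        = Polynomial.aeval (Ideal.Quotient.mk J (X i)) q := by
      rw [← Ideal.Quotient.mkₐ_eq_mk k J, ← Polynomial.aeval_algHom_apply]
    rw [hcomm, Polynomial.aeval_def]
    exact hq0
  have hdeg : ∀ j : Fin 3, degreeOf j p = 0 := by
    intro j
    have hne : ∃ i : Fin 3, i ≠ j := by
      by_cases h : j = 0
      · exact ⟨1, by simp [h]⟩
      · exact ⟨0, fun h' => h h'.symm⟩
    obtain ⟨i, hij⟩ := hne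
    obtain ⟨g, hg0, ⟨v, rfl⟩, hgdeg⟩ := key i
    have hv : v ≠ 0 := fun h => hg0 (by rw [h, mul_zero])
    have hle := my_degreeOf_le_mul j hp.ne_zero hv
    have h0 := hgdeg j (Ne.symm hij)
    omega
  have hsupp : ∀ m ∈ p.support, m = 0 := by
    intro m hm
    ext x
    have := monomial_le_degreeOf x hm
    rw [hdeg x] at this
    simpa using this
  have hpC : p = C (coeff 0 p) := by
    ext m
    rw [coeff_C]
    split_ifs with h
    · rw [← h]
    · by_cases hm : m ∈ p.support
      · exact absurd (hsupp m hm).symm h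
      · simpa [mem_support_iff, not_not] using hm
  have hc : coeff 0 p ≠ 0 := by
    intro h
    apply hp.ne_zero
    rw [hpC, h, map_zero]
  exact hp.not_isUnit (by
    rw [hpC]
    exact IsUnit.of_mul_eq_one (C (coeff 0 p)⁻¹) (by
      rw [← map_mul, mul_inv_cancel₀ hc, map_one]))

lemma my_prime_X0 (k : Type*) [Field k] : Prime (X 0 : MvPolynomial (Fin 3) k) := by
  have h := MulEquiv.prime_iff (MvPolynomial.finSuccEquiv k 2).toMulEquiv
    (p := (X 0 : MvPolynomial (Fin 3) k))
  rw [← h]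
  rw [show ((MvPolynomial.finSuccEquiv k 2).toMulEquiv (X 0 : MvPolynomial (Fin 3) k))
    = Polynomial.X from finSuccEquiv_X_zero]
  exact Polynomial.prime_X

lemma my_relPrime {k : Type*} [Field k] {x y : MvPolynomial (Fin 3) k} (hx : x ≠ 0)
    (h : ∀ p : MvPolynomial (Fin 3) k, Prime p → ¬(p ∣ x ∧ p ∣ y)) : IsRelPrime x y := by
  intro d hdx hdy
  by_contra hdu
  have hd0 : d ≠ 0 := fun h0 => hx (by simpa [h0] using hdx)
  obtain ⟨q, hq, hqd⟩ := WfDvdMonoid.exists_irreducible_factor hdu hd0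
  exact h q (UniqueFactorizationMonoid.irreducible_iff_prime.1 hq) ⟨hqd.trans hdx, hqd.trans hdy⟩

/-- Exactness of the Koszul complex in degree two, in concrete terms: a "syzygy vector"
proportional to `(f0, f1, f2)` (all 2×2 minors vanish) is a multiple of it, provided the `fᵢ`
have no common prime factor. -/
lemma my_cross {k : Type*} [Field k] {f0 f1 f2 a b c : MvPolynomial (Fin 3) k}
    (hp : ∀ p : MvPolynomial (Fin 3) k, Prime p → ¬(p ∣ f0 ∧ p ∣ f1 ∧ p ∣ f2))
    (h1 : a * f1 = b * f0) (h2 : a * f2 = c * f0) (h3 : b * f2 = c * f1) :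
    ∃ t, a = t * f0 ∧ b = t * f1 ∧ c = t * f2 := by
  by_cases hf0 : f0 = 0
  · subst hf0
    by_cases hf1 : f1 = 0
    · subst hf1
      have hf2 : f2 ≠ 0 := fun h0 => hp (X 0) (my_prime_X0 k) (by simp [h0])
      have hf2u : IsUnit f2 := by
        by_contra hu
        obtain ⟨q, hq, hqd⟩ := WfDvdMonoid.exists_irreducible_factor hu hf2
        exact hp q (UniqueFactorizationMonoid.irreducible_iff_prime.1 hq) (by simp [hqd])
      obtain ⟨u, hu⟩ := hf2u
      have ha : a = 0 := by
        rw [mul_zero] at h2; exact (mul_eq_zero.1 h2).resolve_right hf2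
      have hb : b = 0 := by
        rw [mul_zero] at h3; exact (mul_eq_zero.1 h3).resolve_right hf2
      refine ⟨c * (↑u⁻¹ : MvPolynomial (Fin 3) k), by simp [ha], by simp [hb], ?_⟩
      rw [mul_assoc, ← hu, Units.inv_mul, mul_one]
    · have ha : a = 0 := by
        rw [mul_zero] at h1; exact (mul_eq_zero.1 h1).resolve_right hf1
      have hrel : IsRelPrime f1 f2 := my_relPrime hf1 (fun p hq hd =>
        hp p hq ⟨dvd_zero p, hd.1, hd.2⟩)
      obtain ⟨t, ht⟩ : f1 ∣ b := hrel.dvd_of_dvd_mul_right ⟨c, by linear_combination h3⟩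
      refine ⟨t, by simp [ha], by rw [ht]; ring, ?_⟩
      have hc : f1 * c = f1 * (t * f2) := by linear_combination f2 * ht - h3
      exact mul_left_cancel₀ hf1 hc
  · obtain ⟨f0', f1', d, hrel, hd0, hd1⟩ :=
      UniqueFactorizationMonoid.exists_reduced_factors f0 hf0 f1
    have hdne : d ≠ 0 := fun h => hf0 (by rw [← hd0, h, zero_mul])
    have hf0' : f0' ≠ 0 := fun h => hf0 (by rw [← hd0, h, mul_zero])
    have h1' : a * f1' = b * f0' :=
      mul_left_cancel₀ hdne (by linear_combination a * hd1 - b * hd0 + h1)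
    obtain ⟨t0, ht0⟩ : f0' ∣ a := hrel.dvd_of_dvd_mul_right ⟨b, by linear_combination h1'⟩
    have hb : b = t0 * f1' :=
      mul_left_cancel₀ hf0' (by linear_combination f1' * ht0 - h1')
    have h2' : t0 * f2 = c * d :=
      mul_left_cancel₀ hf0' (by linear_combination h2 - f2 * ht0 - c * hd0)
    have hreldf2 : IsRelPrime d f2 := my_relPrime hdne (fun p hq hd =>
      hp p hq ⟨hd.1.trans ⟨f0', hd0.symm⟩, hd.1.trans ⟨f1', hd1.symm⟩, hd.2⟩)
    obtain ⟨t, ht⟩ : d ∣ t0 := hreldf2.dvd_of_dvd_mul_left ⟨c, by linear_combination h2'⟩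
    refine ⟨t, ?_, ?_, ?_⟩
    · rw [ht0, ht, ← hd0]; ring
    · rw [hb, ht, ← hd1]; ring
    · exact mul_left_cancel₀ hdne (by linear_combination f2 * ht - h2')

end AuxiliaryLemmas

/-- Let `k` be a field of characteristic zero, `A = k[x,y,z]` with the
Schouten bracket on polyvector fields, and `f ∈ A` with finite Milnor number.  Then every
bivector field `S` with `[f, S] = 0` is of the form `S = [f, T]` for some trivector field
`T`, and in particular `[S, S] = 0`, i.e. `S` is Poisson. -/
theorem unfolding_stmt7 (k : Type*) [Field k] [CharZero k]
    (f : MvPolynomial (Fin 3) k)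
    (hμ : FiniteDimensional k
      (MvPolynomial (Fin 3) k ⧸
        Ideal.span (Set.range fun i : Fin 3 => pderiv i f)))
    (S : Fin 3 → Fin 3 → MvPolynomial (Fin 3) k) (hS : IsAltBiv S)
    (hfS : ∀ j, schFnBiv f S j = 0) :
    (∃ T : Fin 3 → Fin 3 → Fin 3 → MvPolynomial (Fin 3) k,
      IsAltTriv T ∧ ∀ j l, S j l = schFnTriv f T j l) ∧
    (∀ i j l, schBivBiv S i j l = 0) := by
  have hdiag : ∀ i, S i i = 0 := fun i => CharZero.eq_neg_self_iff.1 (hS i i)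
  have hfS' := hfS
  simp only [schFnBiv, Fin.sum_univ_three] at hfS'
  have h1 : S 1 2 * pderiv 1 f = S 2 0 * pderiv 0 f := by
    linear_combination hfS' 2 - pderiv 2 f * hdiag 2 - pderiv 0 f * hS 0 2
  have h2 : S 1 2 * pderiv 2 f = S 0 1 * pderiv 0 f := by
    linear_combination pderiv 1 f * hdiag 1 + pderiv 2 f * hS 2 1 - hfS' 1
  have h3 : S 2 0 * pderiv 2 f = S 0 1 * pderiv 1 f := by
    linear_combination hfS' 0 - pderiv 0 f * hdiag 0 - pderiv 1 f * hS 1 0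
  have hp' : ∀ p : MvPolynomial (Fin 3) k, Prime p →
      ¬(p ∣ pderiv 0 f ∧ p ∣ pderiv 1 f ∧ p ∣ pderiv 2 f) := by
    intro p hq hd
    refine my_no_common_prime k f hμ p hq (fun i => ?_)
    fin_cases i <;> simp only [Fin.zero_eta, Fin.mk_one, Fin.reduceFinMk]
    · exact hd.1
    · exact hd.2.1
    · exact hd.2.2
  obtain ⟨t, ha, hb, hc⟩ := my_cross hp' h1 h2 h3
  have E21 : S 2 1 = -(t * pderiv 0 f) := by linear_combination hS 2 1 - ha
  have E02 : S 0 2 = -(t * pderiv 1 f) := by linear_combination hS 0 2 - hb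
  have E10 : S 1 0 = -(t * pderiv 2 f) := by linear_combination hS 1 0 - hc
  constructor
  · refine ⟨fun i j l => ((myEps i j l : ℤ) : MvPolynomial (Fin 3) k) * t, ?_, ?_⟩
    · intro i j l
      obtain ⟨e1, e2⟩ := myEps_alt i j l
      constructor
      · show ((myEps i j l : ℤ) : MvPolynomial (Fin 3) k) * t
          = -(((myEps j i l : ℤ) : MvPolynomial (Fin 3) k) * t)
        rw [e1]; push_cast; ring
      · show ((myEps i j l : ℤ) : MvPolynomial (Fin 3) k) * t
          = -(((myEps i l j : ℤ) : MvPolynomial (Fin 3) k) * t)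
        rw [e2]; push_cast; ring
    · intro j l
      simp only [schFnTriv, Fin.sum_univ_three]
      fin_cases j <;> fin_cases l <;> simp only [Fin.zero_eta, Fin.mk_one, Fin.reduceFinMk] <;>
        norm_num [myEps]
      · exact hdiag 0
      · linear_combination hc
      · linear_combination hS 0 2 - hb
      · linear_combination hS 1 0 - hc
      · exact hdiag 1
      · linear_combination ha
      · linear_combination hb
      · linear_combination hS 2 1 - ha
      · exact hdiag 2
  · have h10 := my_pderiv_comm (1 : Fin 3) 0 f
    have h20 := my_pderiv_comm (2 : Fin 3) 0 f
    have h21 := my_pderiv_comm (2 : Fin 3) 1 f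
    intro i j l
    fin_cases i <;> fin_cases j <;> fin_cases l <;>
      simp only [schBivBiv, Fin.sum_univ_three, Fin.zero_eta, Fin.mk_one, Fin.reduceFinMk,
        hdiag, ha, hb, hc, E21, E02, E10] <;>
      simp only [pderiv_mul, map_neg, map_zero, h10, h20, h21] <;>
      ring
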